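/- Let v > 0 and let μ be the product measure (gaussianReal 0 v).prod (gaussianReal 0 v) on ℝ × ℝ, i.e. the centered two-dimensional Gaussian measure whose two coordinates are independent with variance v. Then the first absolute moment of the Euclidean norm is ∫ z, ‖z‖ ∂μ = √v · √(π/2). -/

import Mathlib

open MeasureTheory ProbabilityTheory Real Set
open scoped NNReal ENNReal

lemma gaussian_prod_withDensity (v : ℝ≥0) (hv : v ≠ 0) :
    (gaussianReal 0 v).prod (gaussianReal 0 v)
      = (volume : Measure (ℝ × ℝ)).withDensity
          (fun p => gaussianPDF 0 v p.1 * gaussianPDF 0 v p.2) := by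
  refine Measure.prod_eq (fun s t hs ht => ?_)
  rw [withDensity_apply _ (hs.prod ht), gaussianReal_apply _ hv, gaussianReal_apply _ hv,
    Measure.volume_eq_prod, ← Measure.prod_restrict,
    lintegral_prod_mul ((measurable_gaussianPDF 0 v).aemeasurable)
      ((measurable_gaussianPDF 0 v).aemeasurable)]

/-- For the centered two-dimensional Gaussian measure with independent coordinates of
variance `v > 0`, the first absolute moment of the Euclidean norm equals `√v · √(π/2)`. -/
theorem gaussian_norm_first_moment (v : ℝ≥0) (hv : 0 < v)
    (μ : Measure (ℝ × ℝ)) (hμ : μ = (gaussianReal 0 v).prod (gaussianReal 0 v)) :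
    ∫ z : ℝ × ℝ, Real.sqrt (z.1 ^ 2 + z.2 ^ 2) ∂μ
      = Real.sqrt v * Real.sqrt (Real.pi / 2) := by
  have hv' : v ≠ 0 := hv.ne'
  have hv0 : (0:ℝ) < (v:ℝ) := hv
  subst hμ
  rw [gaussian_prod_withDensity v hv']
  have hd : (fun p : ℝ × ℝ => gaussianPDF 0 v p.1 * gaussianPDF 0 v p.2)
      = fun p : ℝ × ℝ =>
        ((Real.toNNReal (gaussianPDFReal 0 v p.1 * gaussianPDFReal 0 v p.2) : ℝ≥0) : ℝ≥0∞) := by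
    funext p
    rw [gaussianPDF_def, ← ENNReal.ofReal_mul (gaussianPDFReal_nonneg 0 v p.1)]
    rfl
  have hmeas : Measurable fun p : ℝ × ℝ =>
      Real.toNNReal (gaussianPDFReal 0 v p.1 * gaussianPDFReal 0 v p.2) :=
    (((measurable_gaussianPDFReal 0 v).comp measurable_fst).mul
      ((measurable_gaussianPDFReal 0 v).comp measurable_snd)).real_toNNReal
  rw [hd, integral_withDensity_eq_integral_smul hmeas]
  have hC : ∀ x : ℝ, gaussianPDFReal 0 v x
      = (Real.sqrt (2 * π * v))⁻¹ * rexp (-x ^ 2 / (2 * v)) := by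
    intro x
    simp [gaussianPDFReal]
  calc
    ∫ p : ℝ × ℝ, (Real.toNNReal (gaussianPDFReal 0 v p.1 * gaussianPDFReal 0 v p.2) : ℝ)
        • Real.sqrt (p.1 ^ 2 + p.2 ^ 2)
      = ∫ p : ℝ × ℝ, (2 * π * v)⁻¹ * rexp (-(p.1 ^ 2 + p.2 ^ 2) / (2 * v))
          * Real.sqrt (p.1 ^ 2 + p.2 ^ 2) := by
        congr 1; funext p
        rw [smul_eq_mul, Real.coe_toNNReal _
          (mul_nonneg (gaussianPDFReal_nonneg 0 v p.1) (gaussianPDFReal_nonneg 0 v p.2)),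
          hC, hC]
        have hexp : rexp (-p.1 ^ 2 / (2 * v)) * rexp (-p.2 ^ 2 / (2 * v))
            = rexp (-(p.1 ^ 2 + p.2 ^ 2) / (2 * v)) := by
          rw [← Real.exp_add]
          congr 1
          field_simp
          ring
        have hCC : (Real.sqrt (2 * π * v))⁻¹ * (Real.sqrt (2 * π * v))⁻¹ = (2 * π * v)⁻¹ := by
          rw [← mul_inv, Real.mul_self_sqrt (by positivity)]
        rw [← hexp, ← hCC]; ring
    _ = ∫ p in polarCoord.target, p.1 • ((2 * π * v)⁻¹
          * rexp (-((p.1 * Real.cos p.2) ^ 2 + (p.1 * Real.sin p.2) ^ 2) / (2 * v))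
          * Real.sqrt ((p.1 * Real.cos p.2) ^ 2 + (p.1 * Real.sin p.2) ^ 2)) := by
        rw [← integral_comp_polarCoord_symm]
        simp only [polarCoord_symm_apply]
    _ = ∫ p in Ioi (0:ℝ) ×ˢ Ioo (-π) π,
          ((2 * π * v)⁻¹ * (p.1 ^ 2 * rexp (-p.1 ^ 2 / (2 * v)))) * (1:ℝ) := by
        rw [polarCoord_target]
        refine setIntegral_congr_fun (measurableSet_Ioi.prod measurableSet_Ioo) (fun p hp => ?_)
        have h1 : (p.1 * Real.cos p.2) ^ 2 + (p.1 * Real.sin p.2) ^ 2 = p.1 ^ 2 := by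
          rw [← one_mul (p.1 ^ 2), ← sin_sq_add_cos_sq p.2]; ring
        rw [h1, Real.sqrt_sq (le_of_lt hp.1), smul_eq_mul]
        ring
    _ = (∫ r in Ioi (0:ℝ), (2 * π * v)⁻¹ * (r ^ 2 * rexp (-r ^ 2 / (2 * v))))
          * ∫ _ in Ioo (-π) π, (1:ℝ) := by
        rw [← setIntegral_prod_mul, Measure.volume_eq_prod]
    _ = (2 * π * v)⁻¹ * (∫ r in Ioi (0:ℝ), r ^ 2 * rexp (-r ^ 2 / (2 * v))) * (2 * π) := by
        rw [integral_const_mul]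
        simp only [integral_const, Measure.real, Measure.restrict_apply MeasurableSet.univ, Set.univ_inter,
          Real.volume_Ioo, sub_neg_eq_add, ← two_mul,
          ENNReal.toReal_ofReal (by positivity : (0:ℝ) ≤ 2 * π), smul_eq_mul, mul_one]
    _ = Real.sqrt v * Real.sqrt (π / 2) := by
        have hb : (0:ℝ) < ((2:ℝ) * (v:ℝ))⁻¹ := by positivity
        have h1 : (∫ r in Ioi (0:ℝ), r ^ 2 * rexp (-r ^ 2 / (2 * v)))
            = ∫ r in Ioi (0:ℝ), r ^ (2:ℝ) * rexp (-((2:ℝ) * (v:ℝ))⁻¹ * r ^ (2:ℝ)) := by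
          refine setIntegral_congr_fun measurableSet_Ioi (fun x hx => ?_)
          have h2x : x ^ (2:ℝ) = x ^ 2 := by
            rw [← Real.rpow_natCast x 2]; norm_num
          rw [h2x, div_eq_mul_inv]
          ring_nf
        rw [h1, integral_rpow_mul_exp_neg_mul_rpow (by norm_num : (0:ℝ) < 2)
          (by norm_num : (-1:ℝ) < 2) hb]
        have hG : Real.Gamma (((2:ℝ) + 1) / 2) = Real.sqrt π / 2 := by
          have h32 : ((2:ℝ) + 1) / 2 = 1 / 2 + 1 := by norm_num
          rw [h32, Real.Gamma_add_one (by norm_num), Real.Gamma_one_half_eq]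
          ring
        have hbpow : (((2:ℝ) * (v:ℝ))⁻¹) ^ (-((2:ℝ) + 1) / 2)
            = (2 * (v:ℝ)) * Real.sqrt (2 * v) := by
          rw [show (-((2:ℝ) + 1) / 2) = -(((2:ℝ) + 1) / 2) by ring,
            Real.inv_rpow (by positivity), ← Real.rpow_neg (by positivity), neg_neg,
            show (((2:ℝ) + 1) / 2) = 1 + 1/2 by norm_num,
            Real.rpow_add (by positivity), Real.rpow_one, ← Real.sqrt_eq_rpow]
        rw [hG, hbpow]
        have h2 : Real.sqrt 2 * Real.sqrt 2 = 2 := Real.mul_self_sqrt (by norm_num)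
        have hsv : Real.sqrt (2 * v) = Real.sqrt 2 * Real.sqrt v := Real.sqrt_mul (by norm_num) _
        have hsd : Real.sqrt (π / 2) = Real.sqrt π / Real.sqrt 2 :=
          Real.sqrt_div (le_of_lt Real.pi_pos) 2
        have hπ : (0:ℝ) < π := Real.pi_pos
        have hs2 : (0:ℝ) < Real.sqrt 2 := by positivity
        rw [hsv, hsd]
        field_simp
        linear_combination h2
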